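/- In the bivariate log-linear setup, let p₁' ∈ Δ^{d₁−1}, let r*(p₁') = (ρ*, (1−ρ*)·p₂*) ∈ Δ^{d₂} with ρ* ∈ [0,1] and p₂* ∈ Δ^{d₂−1}, set q* := Φ_{p₁'}(r*(p₁')), r₀ := (1, 0, …, 0) ∈ Δ^{d₂}, and r^t := t·r₀ + (1−t)·r*(p₁') for t ∈ [0,1]. Let c_max := max_{1≤i≤n} (‖A_{i,1}‖₂ + ‖A_{i,2}‖₂). Then for every t ∈ [0,1], ‖∇²_{r,p₁} F(r^t, p₁')‖ ≤ F̄(q*) · exp(c_max·(1−ρ*)) · ‖(𝟏 + α_fix + α_comp) ⊙ α_fix‖, where 𝟏 ∈ ℝ^n is the all-ones vector, ⊙ the componentwise product, the left norm is the operator norm and the right norm the Euclidean norm on ℝ^n (Lemma bounding the mixed Hessian along the Add segment). -/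

import Mathlib

noncomputable section
open scoped RealInnerProductSpace BigOperators

/-- Euclidean space `ℝ^m`. -/
abbrev Euc (m : ℕ) := EuclideanSpace ℝ (Fin m)

/-- Build a vector of `ℝ^m` from its coordinates. -/
def vecOf {m : ℕ} (f : Fin m → ℝ) : Euc m := (WithLp.equiv 2 _).symm f

/-- The probability simplex in `ℝ^m`. -/
def probSimplex (m : ℕ) : Set (Euc m) := {p | (∀ i, 0 ≤ p i) ∧ ∑ i, p i = 1}

/-- A point of the collapsed space `ℝ^{1+d₂}` from `(ρ, b₂)`; coordinate `0` is `ρ`. -/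
def pairR {d₂ : ℕ} (ρ : ℝ) (b₂ : Fin d₂ → ℝ) : Euc (d₂ + 1) := vecOf (Fin.cons ρ b₂)

/-- The collapsed simplex `Δ^{d₂} = {(ρ, b₂) : ρ ≥ 0, b₂ ≥ 0, ρ + Σ_j (b₂)_j = 1}`. -/
def collapsedSimplex (d₂ : ℕ) : Set (Euc (d₂ + 1)) := probSimplex (d₂ + 1)

/-- A point of the full space `ℝ^{d₁+d₂}` from its two blocks of coordinates. -/
def pairQ {d₁ d₂ : ℕ} (x : Fin d₁ → ℝ) (y : Fin d₂ → ℝ) : Euc (d₁ + d₂) :=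
  vecOf (Fin.append x y)

/-- The expansion map `Φ_{p₁}(ρ, b₂) = (ρ·p₁, b₂)`. -/
def Phi {d₁ d₂ : ℕ} (p₁ : Euc d₁) (r : Euc (d₂ + 1)) : Euc (d₁ + d₂) :=
  pairQ (fun j => r 0 * p₁ j) (fun j => r j.succ)

variable {n d₁ d₂ : ℕ}

/-- `⟨A_i, q⟩` where `A_i = (A_{i,1}, A_{i,2})`. -/
def innerA (A₁ : Fin n → Euc d₁) (A₂ : Fin n → Euc d₂) (i : Fin n) (q : Euc (d₁ + d₂)) : ℝ :=
  ⟪pairQ (A₁ i) (A₂ i), q⟫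

/-- `F̄(q) = (1/n)·Σ_i exp(⟨A_i, q⟩)`. -/
def Fbar (A₁ : Fin n → Euc d₁) (A₂ : Fin n → Euc d₂) (q : Euc (d₁ + d₂)) : ℝ :=
  (1 / (n : ℝ)) * ∑ i, Real.exp (innerA A₁ A₂ i q)

/-- `F(q) = (1/n)·Σ_i (c_i + exp(⟨A_i, q⟩))`. -/
def Ffull (c : Fin n → ℝ) (A₁ : Fin n → Euc d₁) (A₂ : Fin n → Euc d₂)
    (q : Euc (d₁ + d₂)) : ℝ :=
  (1 / (n : ℝ)) * ∑ i, (c i + Real.exp (innerA A₁ A₂ i q))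

/-- The bivariate objective `F(r, p₁) := F(Φ_{p₁}(r))`. -/
def Fb (c : Fin n → ℝ) (A₁ : Fin n → Euc d₁) (A₂ : Fin n → Euc d₂)
    (r : Euc (d₂ + 1)) (p₁ : Euc d₁) : ℝ :=
  Ffull c A₁ A₂ (Phi p₁ r)


/-! ## Auxiliary lemmas -/

lemma vecOf_apply {m : ℕ} (f : Fin m → ℝ) (i : Fin m) : vecOf f i = f i := rfl

lemma pairR_zero {d₂ : ℕ} (a : ℝ) (b : Fin d₂ → ℝ) : pairR a b 0 = a := rfl
lemma pairR_succ {d₂ : ℕ} (a : ℝ) (b : Fin d₂ → ℝ) (j : Fin d₂) : pairR a b j.succ = b j := by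
  simp [pairR, vecOf_apply]

lemma inner_pairR {d₂ : ℕ} (a : ℝ) (b : Fin d₂ → ℝ) (r : Euc (d₂ + 1)) :
    ⟪pairR a b, r⟫ = a * r 0 + ∑ j, b j * r j.succ := by
  simp [PiLp.inner_apply, RCLike.inner_apply, Fin.sum_univ_succ, pairR_zero, pairR_succ, mul_comm]

lemma inner_pairQ {d₁ d₂ : ℕ} (x : Fin d₁ → ℝ) (y : Fin d₂ → ℝ) (u : Fin d₁ → ℝ)
    (v : Fin d₂ → ℝ) : ⟪pairQ x y, pairQ u v⟫ = ∑ j, x j * u j + ∑ j, y j * v j := by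
  simp only [PiLp.inner_apply, RCLike.inner_apply, starRingEnd_apply, star_trivial]
  rw [show ((fun j => (pairQ u v j) * (pairQ x y j)) : Fin (d₁+d₂) → ℝ)
      = Fin.append (fun j => x j * u j) (fun j => y j * v j) from ?_]
  · rw [Fin.sum_univ_add]; simp [Fin.append]
  · funext j
    refine Fin.addCases (fun j => ?_) (fun j => ?_) j <;>
      simp [pairQ, vecOf_apply, Fin.append_left, Fin.append_right, mul_comm]

/-- the collapsed-direction vector -/
def wv (A₁ : Fin n → Euc d₁) (A₂ : Fin n → Euc d₂) (i : Fin n) (p : Euc d₁) : Euc (d₂ + 1) :=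
  pairR ⟪A₁ i, p⟫ (fun j => A₂ i j)

lemma innerA_Phi (A₁ : Fin n → Euc d₁) (A₂ : Fin n → Euc d₂) (i : Fin n) (p : Euc d₁)
    (r : Euc (d₂ + 1)) : innerA A₁ A₂ i (Phi p r) = ⟪wv A₁ A₂ i p, r⟫ := by
  rw [innerA, Phi, inner_pairQ, wv, inner_pairR]
  simp only [PiLp.inner_apply, RCLike.inner_apply, starRingEnd_apply, star_trivial]
  rw [Finset.sum_mul]
  congr 1
  exact Finset.sum_congr rfl fun j _ => by ring

lemma Fb_eq (c : Fin n → ℝ) (A₁ : Fin n → Euc d₁) (A₂ : Fin n → Euc d₂)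
    (r : Euc (d₂ + 1)) (p : Euc d₁) :
    Fb c A₁ A₂ r p = (1 / (n : ℝ)) * ∑ i, (c i + Real.exp ⟪wv A₁ A₂ i p, r⟫) := by
  simp [Fb, Ffull, innerA_Phi]

lemma gradient_Fb (c : Fin n → ℝ) (A₁ : Fin n → Euc d₁) (A₂ : Fin n → Euc d₂)
    (rt : Euc (d₂ + 1)) (p : Euc d₁) :
    gradient (fun r => Fb c A₁ A₂ r p) rt
      = (1/(n:ℝ)) • ∑ i, Real.exp ⟪wv A₁ A₂ i p, rt⟫ • wv A₁ A₂ i p := by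
  have h : ∀ i : Fin n, HasFDerivAt (fun r : Euc (d₂+1) => c i + Real.exp ⟪wv A₁ A₂ i p, r⟫)
      (Real.exp ⟪wv A₁ A₂ i p, rt⟫ • innerSL ℝ (wv A₁ A₂ i p)) rt :=
    fun i => (((innerSL ℝ (wv A₁ A₂ i p)).hasFDerivAt).exp).const_add (c i)
  have hF : HasFDerivAt (fun r : Euc (d₂+1) => (1/(n:ℝ)) * ∑ i, (c i + Real.exp ⟪wv A₁ A₂ i p, r⟫))
      ((InnerProductSpace.toDual ℝ (Euc (d₂+1)))
        ((1/(n:ℝ)) • ∑ i, Real.exp ⟪wv A₁ A₂ i p, rt⟫ • wv A₁ A₂ i p)) rt := by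
    refine (HasFDerivAt.fun_sum (fun i _ => h i)).const_mul _ |>.congr_fderiv ?_
    ext v
    simp [ContinuousLinearMap.sum_apply, Finset.mul_sum, InnerProductSpace.toDual_apply_apply,
      real_inner_smul_left, sum_inner]
  have hfun : (fun r => Fb c A₁ A₂ r p)
      = fun r : Euc (d₂+1) => (1/(n:ℝ)) * ∑ i, (c i + Real.exp ⟪wv A₁ A₂ i p, r⟫) :=
    funext fun r => Fb_eq c A₁ A₂ r p
  rw [hfun]
  exact ((hasGradientAt_iff_hasFDerivAt).2 hF).gradient

/-- the vector `(1, 0, …, 0)` -/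
def e0 {d₂ : ℕ} : Euc (d₂ + 1) := pairR 1 (fun _ => 0)

lemma pairR_decomp {d₂ : ℕ} (a : ℝ) (b : Fin d₂ → ℝ) :
    pairR a b = pairR 0 b + a • (e0 : Euc (d₂+1)) := by
  ext x
  refine Fin.cases ?_ (fun j => ?_) x <;>
    simp [PiLp.add_apply, PiLp.smul_apply, pairR_zero, pairR_succ, e0, smul_eq_mul]

lemma norm_e0 {d₂ : ℕ} : ‖(e0 : Euc (d₂+1))‖ = 1 := by
  simp [EuclideanSpace.norm_eq, Fin.sum_univ_succ, e0, pairR_zero, pairR_succ]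

lemma norm_vecOf {m : ℕ} (f : Fin m → ℝ) : ‖vecOf f‖ = Real.sqrt (∑ j, f j ^ 2) := by
  simp [EuclideanSpace.norm_eq, vecOf_apply, sq_abs]

lemma norm_pairR_le {d₂ : ℕ} (a : ℝ) (b : Fin d₂ → ℝ) :
    ‖pairR a b‖ ≤ |a| + ‖vecOf b‖ := by
  rw [EuclideanSpace.norm_eq, norm_vecOf, Fin.sum_univ_succ]
  simp only [pairR_zero, pairR_succ, Real.norm_eq_abs, sq_abs]
  have h1 : (0:ℝ) ≤ ∑ j, b j ^ 2 := Finset.sum_nonneg fun j _ => sq_nonneg _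
  have h2 : a ^ 2 + ∑ j, b j ^ 2 ≤ (|a| + Real.sqrt (∑ j, b j ^ 2)) ^ 2 := by
    have := Real.sq_sqrt h1
    nlinarith [abs_nonneg a, Real.sqrt_nonneg (∑ j, b j ^ 2), sq_abs a,
      mul_nonneg (abs_nonneg a) (Real.sqrt_nonneg (∑ j, b j ^ 2))]
  calc Real.sqrt (a ^ 2 + ∑ j, b j ^ 2) ≤ Real.sqrt ((|a| + Real.sqrt (∑ j, b j ^ 2)) ^ 2) :=
        Real.sqrt_le_sqrt h2
    _ = |a| + Real.sqrt (∑ j, b j ^ 2) :=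
        Real.sqrt_sq (by positivity)

lemma norm_le_one_of_simplex {m : ℕ} {p : Euc m} (hp : p ∈ probSimplex m) : ‖p‖ ≤ 1 := by
  obtain ⟨h0, h1⟩ := hp
  rw [EuclideanSpace.norm_eq]
  have hle : ∀ i, p i ≤ 1 := by
    intro i
    calc p i ≤ ∑ j, p j := Finset.single_le_sum (fun j _ => h0 j) (Finset.mem_univ i)
      _ = 1 := h1
  have : ∑ i, ‖p i‖ ^ 2 ≤ 1 := by
    calc ∑ i, ‖p i‖ ^ 2 ≤ ∑ i, p i := by
          refine Finset.sum_le_sum fun i _ => ?_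
          rw [Real.norm_eq_abs, sq_abs]
          nlinarith [h0 i, hle i]
      _ = 1 := h1
  calc Real.sqrt (∑ i, ‖p i‖ ^ 2) ≤ Real.sqrt 1 := Real.sqrt_le_sqrt this
    _ = 1 := Real.sqrt_one

lemma abs_le_norm_vecOf {m : ℕ} (f : Fin m → ℝ) (i : Fin m) : |f i| ≤ ‖vecOf f‖ := by
  rw [norm_vecOf, ← Real.sqrt_sq_eq_abs]
  exact Real.sqrt_le_sqrt (Finset.single_le_sum (fun j _ => sq_nonneg (f j)) (Finset.mem_univ i))

/-- The mixed-derivative candidate. -/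
def Dmap (A₁ : Fin n → Euc d₁) (A₂ : Fin n → Euc d₂) (rt : Euc (d₂+1)) (p₀ : Euc d₁) :
    Euc d₁ →L[ℝ] Euc (d₂+1) :=
  (1/(n:ℝ)) • ∑ i, (Real.exp ⟪wv A₁ A₂ i p₀, rt⟫ • ((innerSL ℝ (A₁ i)).smulRight e0)
    + (Real.exp ⟪wv A₁ A₂ i p₀, rt⟫ • (rt 0 • innerSL ℝ (A₁ i))).smulRight (wv A₁ A₂ i p₀))

lemma hasFDerivAt_G (A₁ : Fin n → Euc d₁) (A₂ : Fin n → Euc d₂) (rt : Euc (d₂+1))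
    (p₀ : Euc d₁) :
    HasFDerivAt (fun p => (1/(n:ℝ)) • ∑ i, Real.exp ⟪wv A₁ A₂ i p, rt⟫ • wv A₁ A₂ i p)
      (Dmap A₁ A₂ rt p₀) p₀ := by
  refine HasFDerivAt.const_smul (HasFDerivAt.fun_sum (𝕜 := ℝ) (x := p₀) (F := Euc (d₂+1)) fun i _ => ?_) (1/(n:ℝ))
  have hwv : ∀ p : Euc d₁, wv A₁ A₂ i p
      = pairR 0 (fun j => A₂ i j) + (innerSL ℝ (A₁ i) p) • (e0 : Euc (d₂+1)) := by
    intro p; rw [wv, pairR_decomp]; rfl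
  have hψ : HasFDerivAt (fun p => wv A₁ A₂ i p) ((innerSL ℝ (A₁ i)).smulRight e0) p₀ := by
    simp only [hwv]
    exact ((innerSL ℝ (A₁ i)).hasFDerivAt.smul_const (e0 : Euc (d₂+1))).const_add _
  have hin : ∀ p : Euc d₁, ⟪wv A₁ A₂ i p, rt⟫
      = innerSL ℝ (A₁ i) p * rt 0 + ∑ j, A₂ i j * rt j.succ := by
    intro p; rw [wv, inner_pairR]; rfl
  have hφ : HasFDerivAt (fun p => Real.exp ⟪wv A₁ A₂ i p, rt⟫)
      (Real.exp ⟪wv A₁ A₂ i p₀, rt⟫ • (rt 0 • innerSL ℝ (A₁ i))) p₀ := by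
    simp only [hin]
    exact (((innerSL ℝ (A₁ i)).hasFDerivAt.mul_const (rt 0)).add_const
      (∑ j, A₂ i j * rt j.succ)).exp
  exact hφ.smul hψ

lemma fderiv_gradient_eq (c : Fin n → ℝ) (A₁ : Fin n → Euc d₁) (A₂ : Fin n → Euc d₂)
    (rt : Euc (d₂+1)) (p₀ : Euc d₁) :
    fderiv ℝ (fun p => gradient (fun r => Fb c A₁ A₂ r p) rt) p₀ = Dmap A₁ A₂ rt p₀ := by
  have hfun : (fun p => gradient (fun r => Fb c A₁ A₂ r p) rt)
      = fun p => (1/(n:ℝ)) • ∑ i, Real.exp ⟪wv A₁ A₂ i p, rt⟫ • wv A₁ A₂ i p :=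
    funext fun p => gradient_Fb c A₁ A₂ rt p
  rw [hfun]
  exact (hasFDerivAt_G A₁ A₂ rt p₀).fderiv

set_option maxHeartbeats 2000000 in
/-- **Lemma (bounding the mixed Hessian along the Add segment).**
Let `p₁' ∈ Δ^{d₁−1}`, `r*(p₁') = (ρ*, (1−ρ*)·p₂*) ∈ Δ^{d₂}` with `ρ* ∈ [0,1]` and
`p₂* ∈ Δ^{d₂−1}`, `q* = Φ_{p₁'}(r*(p₁'))`, `r₀ = (1, 0, …, 0)`, and
`r^t = t·r₀ + (1−t)·r*(p₁')`.  With `c_max = max_i (‖A_{i,1}‖ + ‖A_{i,2}‖)`, for every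
`t ∈ [0,1]`,
`‖∇²_{r,p₁} F(r^t, p₁')‖ ≤ F̄(q*)·exp(c_max·(1−ρ*))·‖(𝟏 + α_fix + α_comp) ⊙ α_fix‖`. -/
theorem mixed_hessian_bound_add_segment
    {n d₁ d₂ : ℕ} (hn : 0 < n) (hd₁ : 0 < d₁) (hd₂ : 0 < d₂)
    (c : Fin n → ℝ) (hc : ∀ i, 0 < c i)
    (A₁ : Fin n → Euc d₁) (A₂ : Fin n → Euc d₂)
    {p₁' : Euc d₁} (hp₁' : p₁' ∈ probSimplex d₁)
    {ρstar : ℝ} (hρ : ρstar ∈ Set.Icc (0 : ℝ) 1)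
    {p₂star : Euc d₂} (hp₂star : p₂star ∈ probSimplex d₂)
    (hrstarΔ : pairR ρstar (fun j => (1 - ρstar) * p₂star j) ∈ collapsedSimplex d₂) :
    ∀ t ∈ Set.Icc (0 : ℝ) 1,
      ‖fderiv ℝ (fun p => gradient (fun r => Fb c A₁ A₂ r p)
            (t • pairR 1 (fun _ => 0) +
              (1 - t) • pairR ρstar (fun j => (1 - ρstar) * p₂star j))) p₁'‖ ≤
        Fbar A₁ A₂ (Phi p₁' (pairR ρstar (fun j => (1 - ρstar) * p₂star j))) *
          Real.exp ((⨆ i, (‖A₁ i‖ + ‖A₂ i‖)) * (1 - ρstar)) *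
            ‖vecOf (fun i => (1 + ‖A₁ i‖ + ‖A₂ i‖) * ‖A₁ i‖)‖ := by
  intro t ht
  obtain ⟨ht0, ht1⟩ := ht
  obtain ⟨hρ0, hρ1⟩ := hρ
  set rst : Euc (d₂+1) := pairR ρstar (fun j => (1 - ρstar) * p₂star j) with hrst
  set rt : Euc (d₂+1) := t • pairR 1 (fun _ => 0) + (1 - t) • rst with hrtdef
  set qstar : Euc (d₁+d₂) := Phi p₁' rst with hqs
  set cmax : ℝ := ⨆ i, (‖A₁ i‖ + ‖A₂ i‖) with hcmax
  set C : ℝ := Real.exp (cmax * (1 - ρstar)) with hC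
  set K : ℝ := ‖vecOf (fun i => (1 + ‖A₁ i‖ + ‖A₂ i‖) * ‖A₁ i‖)‖ with hK
  rw [fderiv_gradient_eq c A₁ A₂ rt p₁', Dmap]
  -- coordinates of rt
  have hrt0 : rt 0 = t + (1 - t) * ρstar := by
    simp [hrtdef, PiLp.add_apply, PiLp.smul_apply, smul_eq_mul, hrst, pairR_zero]
  have hrts : ∀ j : Fin d₂, rt j.succ = (1 - t) * ((1 - ρstar) * p₂star j) := by
    intro j
    simp [hrtdef, PiLp.add_apply, PiLp.smul_apply, smul_eq_mul, hrst, pairR_succ]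
  have hrt0_nonneg : 0 ≤ rt 0 := by rw [hrt0]; nlinarith
  have hrt0_le : rt 0 ≤ 1 := by rw [hrt0]; nlinarith
  -- cmax bounds
  have hcm : ∀ i, ‖A₁ i‖ + ‖A₂ i‖ ≤ cmax := fun i =>
    le_ciSup (f := fun i => ‖A₁ i‖ + ‖A₂ i‖) (Set.Finite.bddAbove (Set.finite_range _)) i
  have hcm0 : 0 ≤ cmax := le_trans (by positivity) (hcm ⟨0, hn⟩)
  -- exponent bound
  have hexp : ∀ i, ⟪wv A₁ A₂ i p₁', rt⟫ ≤ innerA A₁ A₂ i qstar + cmax * (1 - ρstar) := by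
    intro i
    have hq : innerA A₁ A₂ i qstar = ⟪wv A₁ A₂ i p₁', rst⟫ := innerA_Phi A₁ A₂ i p₁' rst
    have hrst0 : rst 0 = ρstar := rfl
    have hrsts : ∀ j : Fin d₂, rst j.succ = (1 - ρstar) * p₂star j := fun j => pairR_succ _ _ j
    rw [hq, wv, inner_pairR, inner_pairR]
    simp only [pairR_zero, pairR_succ, hrt0, hrts, hrst0, hrsts]
    have ha : |⟪A₁ i, p₁'⟫| ≤ ‖A₁ i‖ := by
      calc |⟪A₁ i, p₁'⟫| ≤ ‖A₁ i‖ * ‖p₁'‖ := abs_real_inner_le_norm _ _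
        _ ≤ ‖A₁ i‖ * 1 := by
            exact mul_le_mul_of_nonneg_left (norm_le_one_of_simplex hp₁') (norm_nonneg _)
        _ = ‖A₁ i‖ := mul_one _
    have hb : |⟪A₂ i, p₂star⟫| ≤ ‖A₂ i‖ := by
      calc |⟪A₂ i, p₂star⟫| ≤ ‖A₂ i‖ * ‖p₂star‖ := abs_real_inner_le_norm _ _
        _ ≤ ‖A₂ i‖ * 1 := by
            exact mul_le_mul_of_nonneg_left (norm_le_one_of_simplex hp₂star) (norm_nonneg _)
        _ = ‖A₂ i‖ := mul_one _
    have hbsum : ∑ j, A₂ i j * ((1 - t) * ((1 - ρstar) * p₂star j))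
        = (1 - t) * (1 - ρstar) * ⟪A₂ i, p₂star⟫ := by
      simp only [PiLp.inner_apply, RCLike.inner_apply, starRingEnd_apply, star_trivial,
        Finset.mul_sum]
      exact Finset.sum_congr rfl fun j _ => by ring
    have hbsum' : ∑ j, A₂ i j * ((1 - ρstar) * p₂star j)
        = (1 - ρstar) * ⟪A₂ i, p₂star⟫ := by
      simp only [PiLp.inner_apply, RCLike.inner_apply, starRingEnd_apply, star_trivial,
        Finset.mul_sum]
      exact Finset.sum_congr rfl fun j _ => by ring
    rw [hbsum, hbsum']
    set a := ⟪A₁ i, p₁'⟫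
    set b := ⟪A₂ i, p₂star⟫
    have hcmi := hcm i
    have h1 : t * (1 - ρstar) * (a - b) ≤ (1 - ρstar) * cmax := by
      have habs : |a - b| ≤ cmax := by
        calc |a - b| ≤ |a| + |b| := abs_sub _ _
          _ ≤ ‖A₁ i‖ + ‖A₂ i‖ := add_le_add ha hb
          _ ≤ cmax := hcmi
      have h2 : t * (1 - ρstar) * (a - b) ≤ t * (1 - ρstar) * |a - b| :=
        mul_le_mul_of_nonneg_left (le_abs_self _) (by nlinarith)
      nlinarith [abs_nonneg (a - b)]
    nlinarith
  -- per-i coefficient bound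
  have hknorm : ∀ i, (1 + ‖A₁ i‖ + ‖A₂ i‖) * ‖A₁ i‖ ≤ K := by
    intro i
    calc (1 + ‖A₁ i‖ + ‖A₂ i‖) * ‖A₁ i‖
        = |(1 + ‖A₁ i‖ + ‖A₂ i‖) * ‖A₁ i‖| := (abs_of_nonneg (by positivity)).symm
      _ ≤ K := le_of_le_of_eq (abs_le_norm_vecOf (fun i => (1 + ‖A₁ i‖ + ‖A₂ i‖) * ‖A₁ i‖) i) hK.symm
  have hwnorm : ∀ i, ‖wv A₁ A₂ i p₁'‖ ≤ ‖A₁ i‖ + ‖A₂ i‖ := by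
    intro i
    have h := norm_pairR_le ⟪A₁ i, p₁'⟫ (fun j => A₂ i j)
    have hveq : vecOf (fun j => A₂ i j) = A₂ i := rfl
    rw [hveq] at h
    refine le_trans h (add_le_add ?_ le_rfl)
    calc |⟪A₁ i, p₁'⟫| ≤ ‖A₁ i‖ * ‖p₁'‖ := abs_real_inner_le_norm _ _
      _ ≤ ‖A₁ i‖ * 1 := mul_le_mul_of_nonneg_left (norm_le_one_of_simplex hp₁') (norm_nonneg _)
      _ = ‖A₁ i‖ := mul_one _
  -- Fbar nonneg, K nonneg
  have hFbar0 : 0 ≤ Fbar A₁ A₂ qstar := by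
    rw [Fbar]
    have : (0:ℝ) ≤ ∑ i, Real.exp (innerA A₁ A₂ i qstar) :=
      Finset.sum_nonneg fun i _ => (Real.exp_pos _).le
    positivity
  have hK0 : 0 ≤ K := norm_nonneg _
  refine ContinuousLinearMap.opNorm_le_bound _ (by positivity) fun v => ?_
  set T : Fin n → Euc d₁ →L[ℝ] Euc (d₂+1) := fun i =>
    Real.exp ⟪wv A₁ A₂ i p₁', rt⟫ • ((innerSL ℝ (A₁ i)).smulRight e0)
      + (Real.exp ⟪wv A₁ A₂ i p₁', rt⟫ • (rt 0 • innerSL ℝ (A₁ i))).smulRight (wv A₁ A₂ i p₁')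
    with hT
  have hTi : ∀ i : Fin n, ‖T i v‖ ≤ Real.exp (innerA A₁ A₂ i qstar) * (C * K * ‖v‖) := by
    intro i
    set e := Real.exp ⟪wv A₁ A₂ i p₁', rt⟫ with he
    have he0 : 0 < e := Real.exp_pos _
    have hiv : |⟪A₁ i, v⟫| ≤ ‖A₁ i‖ * ‖v‖ := abs_real_inner_le_norm _ _
    have happ : T i v = e • (⟪A₁ i, v⟫ • (e0 : Euc (d₂+1)))
        + (e * (rt 0 * ⟪A₁ i, v⟫)) • wv A₁ A₂ i p₁' := by
      rw [hT]
      simp only [ContinuousLinearMap.add_apply, ContinuousLinearMap.smul_apply,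
        ContinuousLinearMap.smulRight_apply, innerSL_apply_apply, smul_eq_mul]
      rfl
    rw [happ]
    have h1 : ‖e • (⟪A₁ i, v⟫ • (e0 : Euc (d₂+1)))‖ = e * |⟪A₁ i, v⟫| := by
      rw [norm_smul, norm_smul, norm_e0, Real.norm_eq_abs, Real.norm_eq_abs,
        abs_of_pos he0, mul_one]
    have h2 : ‖(e * (rt 0 * ⟪A₁ i, v⟫)) • wv A₁ A₂ i p₁'‖
        ≤ e * (rt 0 * |⟪A₁ i, v⟫|) * (‖A₁ i‖ + ‖A₂ i‖) := by
      rw [norm_smul, Real.norm_eq_abs, abs_mul, abs_mul, abs_of_pos he0,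
        abs_of_nonneg hrt0_nonneg]
      exact mul_le_mul_of_nonneg_left (hwnorm i) (by positivity)
    have hE : e ≤ Real.exp (innerA A₁ A₂ i qstar) * C := by
      rw [he, hC, ← Real.exp_add]
      apply Real.exp_le_exp.2
      linarith [hexp i, mul_comm cmax (1 - ρstar)]
    have hki := hknorm i
    calc ‖e • (⟪A₁ i, v⟫ • (e0 : Euc (d₂+1)))
          + (e * (rt 0 * ⟪A₁ i, v⟫)) • wv A₁ A₂ i p₁'‖
        ≤ e * |⟪A₁ i, v⟫| + e * (rt 0 * |⟪A₁ i, v⟫|) * (‖A₁ i‖ + ‖A₂ i‖) := by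
          calc _ ≤ ‖e • (⟪A₁ i, v⟫ • (e0 : Euc (d₂+1)))‖
                + ‖(e * (rt 0 * ⟪A₁ i, v⟫)) • wv A₁ A₂ i p₁'‖ := norm_add_le _ _
            _ ≤ _ := by rw [h1]; exact add_le_add le_rfl h2
      _ = e * (|⟪A₁ i, v⟫| + rt 0 * |⟪A₁ i, v⟫| * (‖A₁ i‖ + ‖A₂ i‖)) := by ring
      _ ≤ e * ((1 + ‖A₁ i‖ + ‖A₂ i‖) * ‖A₁ i‖ * ‖v‖) := by
          refine mul_le_mul_of_nonneg_left ?_ he0.le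
          have hx0 := abs_nonneg ⟪A₁ i, v⟫
          have hs0 : (0:ℝ) ≤ ‖A₁ i‖ + ‖A₂ i‖ := by positivity
          have k1 : rt 0 * |⟪A₁ i, v⟫| ≤ |⟪A₁ i, v⟫| := by nlinarith
          have k2 : rt 0 * |⟪A₁ i, v⟫| * (‖A₁ i‖ + ‖A₂ i‖)
              ≤ |⟪A₁ i, v⟫| * (‖A₁ i‖ + ‖A₂ i‖) := mul_le_mul_of_nonneg_right k1 hs0
          have t2 : |⟪A₁ i, v⟫| * (1 + (‖A₁ i‖ + ‖A₂ i‖))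
              ≤ ‖A₁ i‖ * ‖v‖ * (1 + (‖A₁ i‖ + ‖A₂ i‖)) :=
            mul_le_mul_of_nonneg_right hiv (by positivity)
          nlinarith [k2, t2]
      _ ≤ Real.exp (innerA A₁ A₂ i qstar) * C * ((1 + ‖A₁ i‖ + ‖A₂ i‖) * ‖A₁ i‖ * ‖v‖) := by
          refine mul_le_mul_of_nonneg_right hE (by positivity)
      _ ≤ Real.exp (innerA A₁ A₂ i qstar) * C * (K * ‖v‖) := by
          have hC0 : 0 < C := Real.exp_pos _
          have hE0 : 0 < Real.exp (innerA A₁ A₂ i qstar) := Real.exp_pos _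
          refine mul_le_mul_of_nonneg_left ?_ (by positivity)
          exact mul_le_mul_of_nonneg_right hki (norm_nonneg v)
      _ = Real.exp (innerA A₁ A₂ i qstar) * (C * K * ‖v‖) := by ring
  calc ‖((1/(n:ℝ)) • ∑ i, T i) v‖ = (1/(n:ℝ)) * ‖(∑ i, T i) v‖ := by
        rw [ContinuousLinearMap.smul_apply, norm_smul, Real.norm_eq_abs,
          abs_of_nonneg (by positivity : (0:ℝ) ≤ 1/(n:ℝ))]
    _ ≤ (1/(n:ℝ)) * ∑ i, Real.exp (innerA A₁ A₂ i qstar) * (C * K * ‖v‖) := by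
        refine mul_le_mul_of_nonneg_left ?_ (by positivity)
        rw [ContinuousLinearMap.sum_apply]
        exact le_trans (norm_sum_le _ _) (Finset.sum_le_sum fun i _ => hTi i)
    _ = Fbar A₁ A₂ qstar * C * K * ‖v‖ := by
        rw [Fbar, ← Finset.sum_mul]; ring

end
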